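/- Let ε ∈ (0,1), α ∈ (0, π−ε], e ∈ S^d, and let ρ_α and ρ_{α/8} denote the boundary-adapted metrics on B(e,α) and B(e,α/8) respectively, where ρ_β(x,y) = (1/β)·√(d(x,y)² + β·(√(β−d(x,e)) − √(β−d(y,e)))²). Let T(η sin θ, cos θ) = (η sin 8θ, cos 8θ) map B(e,α/8) onto B(e,α). Then there is a constant C₅ ≥ 1 depending only on d and ε such that for all x, y ∈ B(e, α/8), C₅⁻¹·ρ_{α/8}(x,y) ≤ ρ_α(Tx, Ty) ≤ C₅·ρ_{α/8}(x,y). -/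

import Mathlib

open RealInnerProductSpace

/-- The geodesic distance on the unit sphere of `EuclideanSpace ℝ (Fin (d+1))`. -/
noncomputable def geo {d : ℕ} (x y : EuclideanSpace ℝ (Fin (d+1))) : ℝ :=
  Real.arccos ⟪x, y⟫

/-- The boundary-adapted metric on the spherical cap B(e,β). -/
noncomputable def rhoCap {d : ℕ} (e : EuclideanSpace ℝ (Fin (d+1))) (β : ℝ)
    (x y : EuclideanSpace ℝ (Fin (d+1))) : ℝ :=
  (1/β) * Real.sqrt ((geo x y)^2 +
    β * (Real.sqrt (β - geo x e) - Real.sqrt (β - geo y e))^2)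

/-- The dilation map T(η sin θ, cos θ) = (η sin 8θ, cos 8θ), written intrinsically. -/
noncomputable def Tmap {d : ℕ} (e x : EuclideanSpace ℝ (Fin (d+1))) :
    EuclideanSpace ℝ (Fin (d+1)) :=
  Real.cos (8 * geo x e) • e +
    (Real.sin (8 * geo x e) / Real.sin (geo x e)) • (x - Real.cos (geo x e) • e)

namespace QuasiIsomAux

open Real

/- ### Scalar lemmas -/

lemma abs_sin_nsmul (n : ℕ) (x : ℝ) : |Real.sin ((n : ℝ) * x)| ≤ (n : ℝ) * |Real.sin x| := by
  induction n with
  | zero => simp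
  | succ n ih =>
    have h : ((n : ℝ) + 1) * x = (n : ℝ) * x + x := by ring
    push_cast
    rw [h, Real.sin_add]
    calc |Real.sin ((n:ℝ)*x) * Real.cos x + Real.cos ((n:ℝ)*x) * Real.sin x|
        ≤ |Real.sin ((n:ℝ)*x) * Real.cos x| + |Real.cos ((n:ℝ)*x) * Real.sin x| := abs_add_le _ _
      _ ≤ |Real.sin ((n:ℝ)*x)| * 1 + 1 * |Real.sin x| := by
          rw [abs_mul, abs_mul]
          gcongr
          · exact Real.abs_cos_le_one _
          · exact Real.abs_cos_le_one _
      _ ≤ (n : ℝ) * |Real.sin x| + 1 * |Real.sin x| := by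
          rw [mul_one]; gcongr
      _ = ((n : ℝ) + 1) * |Real.sin x| := by ring

lemma abs_sin_8 (x : ℝ) : |Real.sin (8 * x)| ≤ 8 * |Real.sin x| := by
  have := abs_sin_nsmul 8 x
  push_cast at this
  exact this

lemma sin_8_ub {x : ℝ} (hx : 0 ≤ Real.sin x) : Real.sin (8 * x) ≤ 8 * Real.sin x := by
  have h := abs_sin_8 x
  rw [abs_of_nonneg hx] at h
  exact (le_abs_self _).trans h

lemma sin_8_lb {ε θ : ℝ} (hε : 0 < ε) (hε' : ε < 1) (hθ0 : 0 ≤ θ)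
    (hθ : 8 * θ ≤ π - ε) : ε * Real.sin θ ≤ Real.sin (8 * θ) := by
  have hπ := Real.pi_gt_three
  have hππ := Real.pi_lt_d2
  have hsθ : 0 ≤ Real.sin θ := Real.sin_nonneg_of_nonneg_of_le_pi hθ0 (by linarith)
  rcases le_or_gt (8 * θ) (π / 2) with h | h
  · have h1 : Real.sin θ ≤ θ := Real.sin_le hθ0
    have h2 : 2 / π * (8 * θ) ≤ Real.sin (8 * θ) := Real.mul_le_sin (by linarith) h
    have h3 : θ * π ≤ θ * 16 := by nlinarith
    have h4 : θ ≤ 2 / π * (8 * θ) := by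
      rw [div_mul_eq_mul_div, le_div_iff₀ Real.pi_pos]; linarith
    nlinarith
  · have h2 : 2 / π * (π - 8 * θ) ≤ Real.sin (π - 8 * θ) :=
      Real.mul_le_sin (by linarith) (by linarith)
    rw [Real.sin_pi_sub] at h2
    have h3 : Real.sin θ ≤ θ := Real.sin_le hθ0
    have h4 : 2 / π * ε ≤ 2 / π * (π - 8*θ) :=
      mul_le_mul_of_nonneg_left (by linarith) (by positivity)
    have h5 : ε * Real.sin θ ≤ ε * θ := by nlinarith
    have hθ8 : θ ≤ π / 8 := by linarith
    have h6 : ε * θ ≤ 2 / π * ε := by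
      rw [div_mul_eq_mul_div, le_div_iff₀ Real.pi_pos]
      have k1 : θ * π ≤ (π/8) * π := by nlinarith
      have k2 := mul_le_mul_of_nonneg_left k1 hε.le
      have hπ2 : π * π ≤ 16 := by nlinarith
      have k3 := mul_le_mul_of_nonneg_left hπ2 hε.le
      nlinarith
    linarith

lemma key_ineq {ε θ t c : ℝ} (hε : 0 < ε) (hε' : ε < 1)
    (hθ0 : 0 ≤ θ) (hθ : 8 * θ ≤ π - ε) (ht0 : 0 ≤ t) (ht : 8 * t ≤ π - ε)
    (hc : |c| ≤ 1) :
    ε^2 * (1 - (Real.cos θ * Real.cos t + Real.sin θ * Real.sin t * c)) ≤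
      1 - (Real.cos (8*θ) * Real.cos (8*t) + Real.sin (8*θ) * Real.sin (8*t) * c) ∧
    1 - (Real.cos (8*θ) * Real.cos (8*t) + Real.sin (8*θ) * Real.sin (8*t) * c) ≤
      64 * (1 - (Real.cos θ * Real.cos t + Real.sin θ * Real.sin t * c)) := by
  have hπ := Real.pi_gt_three
  have hc1 : c ≤ 1 := (abs_le.mp hc).2
  have hsθ : 0 ≤ Real.sin θ := Real.sin_nonneg_of_nonneg_of_le_pi hθ0 (by linarith)
  have hst : 0 ≤ Real.sin t := Real.sin_nonneg_of_nonneg_of_le_pi ht0 (by linarith)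
  have hs8θ : 0 ≤ Real.sin (8*θ) :=
    Real.sin_nonneg_of_nonneg_of_le_pi (by linarith) (by linarith)
  have hs8t : 0 ≤ Real.sin (8*t) :=
    Real.sin_nonneg_of_nonneg_of_le_pi (by linarith) (by linarith)
  have idP : 1 - (Real.cos θ * Real.cos t + Real.sin θ * Real.sin t * c)
      = (1 - Real.cos (θ - t)) + Real.sin θ * Real.sin t * (1 - c) := by
    rw [Real.cos_sub]; ring
  have idQ : 1 - (Real.cos (8*θ) * Real.cos (8*t) + Real.sin (8*θ) * Real.sin (8*t) * c)
      = (1 - Real.cos (8*θ - 8*t)) + Real.sin (8*θ) * Real.sin (8*t) * (1 - c) := by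
    rw [Real.cos_sub]; ring
  have t1u : 1 - Real.cos (8*θ - 8*t) ≤ 64 * (1 - Real.cos (θ - t)) := by
    have e1 : Real.cos (θ - t) = 1 - 2 * Real.sin ((θ-t)/2)^2 := by
      have := Real.sin_sq_eq_half_sub (x := (θ-t)/2)
      rw [show 2 * ((θ-t)/2) = θ - t by ring] at this
      linarith
    have e2 : Real.cos (8*θ - 8*t) = 1 - 2 * Real.sin (8*((θ-t)/2))^2 := by
      have := Real.sin_sq_eq_half_sub (x := 4*(θ-t))
      rw [show 2 * (4*(θ-t)) = 8*θ - 8*t by ring] at this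
      rw [show 8*((θ-t)/2) = 4*(θ-t) by ring]
      linarith
    have h8 := abs_sin_8 ((θ-t)/2)
    have hsq : Real.sin (8*((θ-t)/2))^2 ≤ 64 * Real.sin ((θ-t)/2)^2 := by
      have h1 : Real.sin (8*((θ-t)/2))^2 = |Real.sin (8*((θ-t)/2))|^2 := (sq_abs _).symm
      have h2 : (8 * |Real.sin ((θ-t)/2)|)^2 = 64 * Real.sin ((θ-t)/2)^2 := by
        rw [mul_pow, sq_abs]; norm_num
      rw [h1, ← h2]
      exact pow_le_pow_left₀ (abs_nonneg _) h8 2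
    rw [e1, e2]; linarith
  have t1l : Real.cos (8*θ - 8*t) ≤ Real.cos (θ - t) := by
    rw [← Real.cos_abs (θ - t), ← Real.cos_abs (8*θ - 8*t)]
    have habs : |8*θ - 8*t| = 8 * |θ - t| := by
      rw [show 8*θ - 8*t = 8*(θ-t) by ring, abs_mul, abs_of_nonneg (by norm_num : (0:ℝ) ≤ 8)]
    have hle : |θ - t| ≤ π / 8 := by
      rw [abs_le]; constructor <;> linarith
    apply Real.cos_le_cos_of_nonneg_of_le_pi (abs_nonneg _)
    · rw [habs]; linarith [abs_nonneg (θ - t)]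
    · rw [habs]; linarith [abs_nonneg (θ - t)]
  have t2u : Real.sin (8*θ) * Real.sin (8*t) ≤ 64 * (Real.sin θ * Real.sin t) := by
    have u1 := sin_8_ub hsθ
    have u2 := sin_8_ub hst
    nlinarith
  have t2l : ε^2 * (Real.sin θ * Real.sin t) ≤ Real.sin (8*θ) * Real.sin (8*t) := by
    have l1 := sin_8_lb hε hε' hθ0 hθ
    have l2 := sin_8_lb hε hε' ht0 ht
    have hmm : (ε * Real.sin θ) * (ε * Real.sin t) ≤ Real.sin (8*θ) * Real.sin (8*t) :=
      mul_le_mul l1 l2 (by positivity) hs8θ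
    nlinarith [hmm]
  have hcos1 : Real.cos (θ - t) ≤ 1 := Real.cos_le_one _
  have hεsq : ε^2 ≤ 1 := by nlinarith
  constructor
  · rw [idP, idQ]
    have a1 : ε^2 * (1 - Real.cos (θ-t)) ≤ 1 - Real.cos (8*θ - 8*t) := by nlinarith
    have a2 : ε^2 * (Real.sin θ * Real.sin t * (1-c)) ≤
        Real.sin (8*θ) * Real.sin (8*t) * (1-c) := by nlinarith
    linarith
  · rw [idP, idQ]
    have a2 : Real.sin (8*θ) * Real.sin (8*t) * (1-c) ≤
        64 * (Real.sin θ * Real.sin t * (1-c)) := by nlinarith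
    linarith

lemma two_mul_sq_le {s : ℝ} (h0 : 0 ≤ s) (h1 : s ≤ π) :
    2 * s^2 ≤ π^2 * (1 - Real.cos s) := by
  have h := Real.cos_le_one_sub_mul_cos_sq (x := s) (by rwa [abs_of_nonneg h0])
  have h2 : 2/π^2 * s^2 ≤ 1 - Real.cos s := by linarith
  have h3 := mul_le_mul_of_nonneg_left h2 (sq_nonneg π)
  have hπ : π ≠ 0 := Real.pi_ne_zero
  calc 2 * s^2 = π^2 * (2/π^2 * s^2) := by field_simp
    _ ≤ π^2 * (1 - Real.cos s) := h3

lemma two_one_sub_cos_le (s : ℝ) : 2 * (1 - Real.cos s) ≤ s^2 := by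
  have := Real.one_sub_sq_div_two_le_cos (x := s)
  linarith

lemma sqrt_mul_le_sqrt {k Z Y : ℝ} (hk : 0 ≤ k) (h : k^2 * Z ≤ Y) :
    k * Real.sqrt Z ≤ Real.sqrt Y := by
  have h1 : k * Real.sqrt Z = Real.sqrt (k^2 * Z) := by
    rw [Real.sqrt_mul (sq_nonneg k), Real.sqrt_sq hk]
  rw [h1]; exact Real.sqrt_le_sqrt h

lemma sqrt_le_mul_sqrt {k Z Y : ℝ} (hk : 0 ≤ k) (h : Y ≤ k^2 * Z) :
    Real.sqrt Y ≤ k * Real.sqrt Z := by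
  have h1 : k * Real.sqrt Z = Real.sqrt (k^2 * Z) := by
    rw [Real.sqrt_mul (sq_nonneg k), Real.sqrt_sq hk]
  rw [h1]; exact Real.sqrt_le_sqrt h

/- ### Vector lemmas -/

variable {d : ℕ} {e x y : EuclideanSpace ℝ (Fin (d+1))}

lemma abs_inner_le_one (hx : ‖x‖ = 1) (hy : ‖y‖ = 1) : |⟪x, y⟫| ≤ 1 := by
  have := abs_real_inner_le_norm x y
  rw [hx, hy] at this; simpa using this

lemma geo_nonneg (x y : EuclideanSpace ℝ (Fin (d+1))) : 0 ≤ geo x y :=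
  Real.arccos_nonneg _

lemma geo_le_pi (x y : EuclideanSpace ℝ (Fin (d+1))) : geo x y ≤ Real.pi :=
  Real.arccos_le_pi _

lemma cos_geo (hx : ‖x‖ = 1) (hy : ‖y‖ = 1) : Real.cos (geo x y) = ⟪x, y⟫ := by
  have h := abs_le.mp (abs_inner_le_one hx hy)
  exact Real.cos_arccos h.1 h.2

lemma sin_geo_nonneg (x y : EuclideanSpace ℝ (Fin (d+1))) : 0 ≤ Real.sin (geo x y) :=
  Real.sin_nonneg_of_nonneg_of_le_pi (geo_nonneg x y) (geo_le_pi x y)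

lemma eq_of_sin_geo_eq_zero (he : ‖e‖ = 1) (hx : ‖x‖ = 1) (hlt : geo x e < Real.pi)
    (h : Real.sin (geo x e) = 0) : x = e ∧ geo x e = 0 := by
  have h0 : geo x e = 0 := by
    rw [Real.sin_eq_zero_iff_of_lt_of_lt (by linarith [geo_nonneg x e, Real.pi_pos]) hlt] at h
    exact h
  have : ⟪x, e⟫ = 1 := by
    rw [← cos_geo hx he, h0, Real.cos_zero]
  exact ⟨(inner_eq_one_iff_of_norm_eq_one hx he).mp this, h0⟩

lemma inner_proj_proj (he : ‖e‖ = 1) :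
    ⟪x - ⟪x,e⟫ • e, y - ⟪y,e⟫ • e⟫ = ⟪x, y⟫ - ⟪x,e⟫ * ⟪y,e⟫ := by
  have hee : ⟪e, e⟫ = 1 := by
    rw [real_inner_self_eq_norm_sq, he]; norm_num
  simp only [inner_sub_left, inner_sub_right, real_inner_smul_left, real_inner_smul_right,
    hee, real_inner_comm e x, real_inner_comm e y]
  ring

lemma norm_proj_sq (he : ‖e‖ = 1) (hx : ‖x‖ = 1) :
    ⟪x - ⟪x,e⟫ • e, x - ⟪x,e⟫ • e⟫ = Real.sin (geo x e)^2 := by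
  rw [inner_proj_proj he, Real.sin_sq, cos_geo hx he, real_inner_self_eq_norm_sq, hx]
  ring

/-- angular cosine between x and y as seen from e. -/
noncomputable def cc {d : ℕ} (e x y : EuclideanSpace ℝ (Fin (d+1))) : ℝ :=
  (⟪x,y⟫ - ⟪x,e⟫ * ⟪y,e⟫) / (Real.sin (geo x e) * Real.sin (geo y e))

lemma abs_cc_le_one (he : ‖e‖ = 1) (hx : ‖x‖ = 1) (hy : ‖y‖ = 1) :
    |cc e x y| ≤ 1 := by
  rcases eq_or_ne (Real.sin (geo x e) * Real.sin (geo y e)) 0 with h0 | h0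
  · rw [cc, h0, div_zero, abs_zero]; norm_num
  · rw [cc, abs_div]
    rw [div_le_one (lt_of_le_of_ne (abs_nonneg _) (Ne.symm (abs_ne_zero.mpr h0)))]
    have hCS := abs_real_inner_le_norm (x - ⟪x,e⟫ • e) (y - ⟪y,e⟫ • e)
    rw [inner_proj_proj he] at hCS
    have hnx : ‖x - ⟪x,e⟫ • e‖ = Real.sin (geo x e) := by
      have h1 : ‖x - ⟪x,e⟫ • e‖^2 = Real.sin (geo x e)^2 := by
        rw [← real_inner_self_eq_norm_sq, norm_proj_sq he hx]
      calc ‖x - ⟪x,e⟫ • e‖ = Real.sqrt (‖x - ⟪x,e⟫ • e‖^2) :=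
            (Real.sqrt_sq (norm_nonneg _)).symm
        _ = Real.sqrt (Real.sin (geo x e)^2) := by rw [h1]
        _ = Real.sin (geo x e) := Real.sqrt_sq (sin_geo_nonneg x e)
    have hny : ‖y - ⟪y,e⟫ • e‖ = Real.sin (geo y e) := by
      have h1 : ‖y - ⟪y,e⟫ • e‖^2 = Real.sin (geo y e)^2 := by
        rw [← real_inner_self_eq_norm_sq, norm_proj_sq he hy]
      calc ‖y - ⟪y,e⟫ • e‖ = Real.sqrt (‖y - ⟪y,e⟫ • e‖^2) :=
            (Real.sqrt_sq (norm_nonneg _)).symm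
        _ = Real.sqrt (Real.sin (geo y e)^2) := by rw [h1]
        _ = Real.sin (geo y e) := Real.sqrt_sq (sin_geo_nonneg y e)
    calc |⟪x,y⟫ - ⟪x,e⟫ * ⟪y,e⟫| ≤ ‖x - ⟪x,e⟫ • e‖ * ‖y - ⟪y,e⟫ • e‖ := hCS
      _ = Real.sin (geo x e) * Real.sin (geo y e) := by rw [hnx, hny]
      _ = |Real.sin (geo x e) * Real.sin (geo y e)| :=
          (abs_of_nonneg (mul_nonneg (sin_geo_nonneg x e) (sin_geo_nonneg y e))).symm

lemma inner_rep (he : ‖e‖ = 1) (hx : ‖x‖ = 1) (hy : ‖y‖ = 1)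
    (hxlt : geo x e < Real.pi) (hylt : geo y e < Real.pi) :
    ⟪x, y⟫ = Real.cos (geo x e) * Real.cos (geo y e) +
      Real.sin (geo x e) * Real.sin (geo y e) * cc e x y := by
  have hee : ⟪e, e⟫ = 1 := by rw [real_inner_self_eq_norm_sq, he]; norm_num
  rcases eq_or_ne (Real.sin (geo x e)) 0 with h0 | h0
  · obtain ⟨rfl, hg0⟩ := eq_of_sin_geo_eq_zero he hx hxlt h0
    rw [h0, hg0, Real.cos_zero, cos_geo hy he]
    rw [real_inner_comm]; ring
  rcases eq_or_ne (Real.sin (geo y e)) 0 with h1 | h1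
  · obtain ⟨rfl, hg0⟩ := eq_of_sin_geo_eq_zero he hy hylt h1
    rw [h1, hg0, Real.cos_zero, cos_geo hx he]
    ring
  · rw [cc, cos_geo hx he, cos_geo hy he, mul_div_assoc']
    rw [mul_div_cancel_left₀ _ (mul_ne_zero h0 h1)]
    ring

lemma inner_Tmap_e (he : ‖e‖ = 1) (hx : ‖x‖ = 1) :
    ⟪Tmap e x, e⟫ = Real.cos (8 * geo x e) := by
  have hee : ⟪e, e⟫ = 1 := by rw [real_inner_self_eq_norm_sq, he]; norm_num
  simp only [Tmap, inner_add_left, inner_sub_left, real_inner_smul_left, hee,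
    cos_geo hx he]
  ring

lemma norm_Tmap (he : ‖e‖ = 1) (hx : ‖x‖ = 1) (hxlt : geo x e < Real.pi) :
    ‖Tmap e x‖ = 1 := by
  have hee : ⟪e, e⟫ = 1 := by rw [real_inner_self_eq_norm_sq, he]; norm_num
  have hself : ⟪Tmap e x, Tmap e x⟫ = 1 := by
    have hex : ⟪e, x - ⟪x,e⟫ • e⟫ = 0 := by
      simp only [inner_sub_right, real_inner_smul_right, hee, real_inner_comm e x]
      ring
    have hxx := norm_proj_sq he hx
    simp only [Tmap, inner_add_left, inner_add_right, real_inner_smul_left,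
      real_inner_smul_right, cos_geo hx he, hee]
    rw [real_inner_comm (x - ⟪x,e⟫ • e) e] at *
    rw [hex, hxx]
    rcases eq_or_ne (Real.sin (geo x e)) 0 with h0 | h0
    · obtain ⟨-, hg0⟩ := eq_of_sin_geo_eq_zero he hx hxlt h0
      rw [h0, hg0]
      norm_num
    · field_simp
      linear_combination (Real.sin (geo x e)) *
        (Real.sin_sq_add_cos_sq (8 * geo x e))
  have := real_inner_self_eq_norm_sq (Tmap e x)
  rw [hself] at this
  nlinarith [norm_nonneg (Tmap e x)]

lemma inner_Tmap_Tmap (he : ‖e‖ = 1) (hx : ‖x‖ = 1) (hy : ‖y‖ = 1)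
    (hxlt : geo x e < Real.pi) (hylt : geo y e < Real.pi) :
    ⟪Tmap e x, Tmap e y⟫ = Real.cos (8 * geo x e) * Real.cos (8 * geo y e) +
      Real.sin (8 * geo x e) * Real.sin (8 * geo y e) * cc e x y := by
  have hee : ⟪e, e⟫ = 1 := by rw [real_inner_self_eq_norm_sq, he]; norm_num
  have hex : ⟪e, x - ⟪x,e⟫ • e⟫ = 0 := by
    simp only [inner_sub_right, real_inner_smul_right, hee, real_inner_comm e x]; ring
  have hey : ⟪e, y - ⟪y,e⟫ • e⟫ = 0 := by
    simp only [inner_sub_right, real_inner_smul_right, hee, real_inner_comm e y]; ring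
  have hpp := inner_proj_proj (x := x) (y := y) he
  simp only [Tmap, inner_add_left, inner_add_right, real_inner_smul_left,
    real_inner_smul_right, cos_geo hx he, cos_geo hy he, hee]
  have hex2 : ⟪x - ⟪x,e⟫ • e, e⟫ = 0 := by rw [real_inner_comm]; exact hex
  rw [hex2, hey, hpp]
  rcases eq_or_ne (Real.sin (geo x e)) 0 with h0 | h0
  · obtain ⟨hxe, hg0⟩ := eq_of_sin_geo_eq_zero he hx hxlt h0
    have hnum : ⟪x, y⟫ - ⟪x,e⟫ * ⟪y,e⟫ = 0 := by
      rw [hxe, hee, real_inner_comm e y]; ring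
    rw [hnum, hg0]
    simp
  rcases eq_or_ne (Real.sin (geo y e)) 0 with h1 | h1
  · obtain ⟨hye, hg0⟩ := eq_of_sin_geo_eq_zero he hy hylt h1
    have hnum : ⟪x, y⟫ - ⟪x,e⟫ * ⟪y,e⟫ = 0 := by
      rw [hye, hee]; ring
    rw [hnum, hg0]
    simp
  · rw [cc]
    field_simp
    ring


lemma sq_comp_ub {P Q D δ : ℝ} (h64 : 1 - Q ≤ 64 * (1 - P))
    (qDl : 2 * D^2 ≤ π^2 * (1 - Q)) (qδu : 2 * (1 - P) ≤ δ^2) :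
    D^2 ≤ 16 * π^2 * δ^2 := by
  have k1 := mul_le_mul_of_nonneg_left h64 (sq_nonneg π)
  have k2 := mul_le_mul_of_nonneg_left qδu (by positivity : (0:ℝ) ≤ 32 * π^2)
  linarith

lemma sq_comp_lb {ε P Q D δ : ℝ} (hε : 0 < ε) (hkey : ε^2 * (1 - P) ≤ 1 - Q)
    (qδl : 2 * δ^2 ≤ π^2 * (1 - P)) (qDu : 2 * (1 - Q) ≤ D^2) :
    4 * ε^2 * δ^2 ≤ π^2 * D^2 := by
  have k1 := mul_le_mul_of_nonneg_left qδl (by positivity : (0:ℝ) ≤ 2 * ε^2)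
  have k2 := mul_le_mul_of_nonneg_left hkey (by positivity : (0:ℝ) ≤ 2 * π^2)
  have k3 := mul_le_mul_of_nonneg_left qDu (sq_nonneg π)
  linarith

lemma eps_sq_le_16pi (ε : ℝ) (hε' : ε < 1) (hε : 0 < ε) : ε^2 ≤ 8 * (2 * π^2) := by
  have := Real.pi_gt_three
  nlinarith

lemma const_ub1 (ε : ℝ) (hε' : ε < 1) (hε : 0 < ε) : 16 * π^2 * ε^2 ≤ 1024 * π^2 := by
  have h1 : ε^2 ≤ 1 := by nlinarith
  have h2 := mul_le_mul_of_nonneg_left h1 (by positivity : (0:ℝ) ≤ 16 * π^2)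
  nlinarith [sq_nonneg π]

lemma const_ub2 (ε : ℝ) (hε' : ε < 1) (hε : 0 < ε) : 8 * ε^2 ≤ 128 * π^2 := by
  have := Real.pi_gt_three
  nlinarith

end QuasiIsomAux

set_option maxHeartbeats 1000000 in
open QuasiIsomAux in
/-- The map T is a quasi-isometry from (B(e,α/8), ρ_{α/8}) to (B(e,α), ρ_α),
with constant depending only on d and ε. -/
theorem stmt_15 (d : ℕ) (ε : ℝ) (hε : 0 < ε) (hε' : ε < 1) :
    ∃ C₅ : ℝ, 1 ≤ C₅ ∧
    ∀ (e x y : EuclideanSpace ℝ (Fin (d+1))) (α : ℝ),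
      ‖e‖ = 1 → 0 < α → α ≤ Real.pi - ε →
      ‖x‖ = 1 → geo x e ≤ α/8 → ‖y‖ = 1 → geo y e ≤ α/8 →
      C₅⁻¹ * rhoCap e (α/8) x y ≤ rhoCap e α (Tmap e x) (Tmap e y) ∧
      rhoCap e α (Tmap e x) (Tmap e y) ≤ C₅ * rhoCap e (α/8) x y := by
  have hπ3 := Real.pi_gt_three
  refine ⟨4 * Real.pi / ε, ?_, ?_⟩
  · rw [le_div_iff₀ hε]; nlinarith
  intro e x y α he hα hα' hx hxθ hy hyθ
  have hθ0 : 0 ≤ geo x e := geo_nonneg x e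
  have ht0 : 0 ≤ geo y e := geo_nonneg y e
  have hθ8 : 8 * geo x e ≤ Real.pi - ε := by linarith
  have ht8 : 8 * geo y e ≤ Real.pi - ε := by linarith
  have hxlt : geo x e < Real.pi := by linarith
  have hylt : geo y e < Real.pi := by linarith
  have hXnorm : ‖Tmap e x‖ = 1 := norm_Tmap he hx hxlt
  have hYnorm : ‖Tmap e y‖ = 1 := norm_Tmap he hy hylt
  -- the geodesic colatitudes of the images
  have hGX : geo (Tmap e x) e = 8 * geo x e := by
    rw [geo, inner_Tmap_e he hx, Real.arccos_cos (by linarith) (by linarith)]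
  have hGY : geo (Tmap e y) e = 8 * geo y e := by
    rw [geo, inner_Tmap_e he hy, Real.arccos_cos (by linarith) (by linarith)]
  -- key comparison of the cosines
  have hcabs := abs_cc_le_one he hx hy
  have hkey := key_ineq (θ := geo x e) (t := geo y e) (c := cc e x y)
    hε hε' hθ0 hθ8 ht0 ht8 hcabs
  rw [← inner_rep he hx hy hxlt hylt, ← inner_Tmap_Tmap he hx hy hxlt hylt] at hkey
  have hcosδ : Real.cos (geo x y) = ⟪x, y⟫ := cos_geo hx hy
  have hcosD : Real.cos (geo (Tmap e x) (Tmap e y)) = ⟪Tmap e x, Tmap e y⟫ :=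
    cos_geo hXnorm hYnorm
  rw [← hcosδ, ← hcosD] at hkey
  set δ := geo x y with hδdef
  set D := geo (Tmap e x) (Tmap e y) with hDdef
  have hδ0 : 0 ≤ δ := geo_nonneg x y
  have hδπ : δ ≤ Real.pi := geo_le_pi x y
  have hD0 : 0 ≤ D := geo_nonneg _ _
  have hDπ : D ≤ Real.pi := geo_le_pi _ _
  have qδl := two_mul_sq_le hδ0 hδπ
  have qδu := two_one_sub_cos_le δ
  have qDl := two_mul_sq_le hD0 hDπ
  have qDu := two_one_sub_cos_le D
  -- two-sided comparison of squared geodesic distances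
  have hDub : D^2 ≤ 16 * Real.pi^2 * δ^2 := sq_comp_ub hkey.2 qDl qδu
  have hDlb : 4 * ε^2 * δ^2 ≤ Real.pi^2 * D^2 := sq_comp_lb hε hkey.1 qδl qDu
  clear hkey hcosδ hcosD hcabs qδl qδu qDl qDu hXnorm hYnorm
  -- boundary terms
  set w := Real.sqrt (α/8 - geo x e) - Real.sqrt (α/8 - geo y e) with hwdef
  have hW : (Real.sqrt (α - 8 * geo x e) - Real.sqrt (α - 8 * geo y e))^2 = 8 * w^2 := by
    have e1 : α - 8 * geo x e = 8 * (α/8 - geo x e) := by ring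
    have e2 : α - 8 * geo y e = 8 * (α/8 - geo y e) := by ring
    rw [e1, e2, Real.sqrt_mul (by norm_num : (0:ℝ) ≤ 8),
      Real.sqrt_mul (by norm_num : (0:ℝ) ≤ 8), hwdef, ← mul_sub, mul_pow,
      Real.sq_sqrt (by norm_num : (0:ℝ) ≤ 8)]
  have hwsq : (0:ℝ) ≤ α * w^2 := by positivity
  have hδsq : (0:ℝ) ≤ Real.pi^2 * δ^2 := by positivity
  -- unfold rhoCap
  have hρα : rhoCap e α (Tmap e x) (Tmap e y)
      = (1/α) * Real.sqrt (D^2 + 8 * (α * w^2)) := by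
    rw [rhoCap, ← hDdef, hGX, hGY, hW]
    ring_nf
  have hρ8 : rhoCap e (α/8) x y
      = (1/α) * (8 * Real.sqrt (δ^2 + α * w^2 / 8)) := by
    rw [rhoCap, ← hδdef, ← hwdef]
    field_simp
  have hα' : (0:ℝ) < 1/α := by positivity
  constructor
  · -- lower bound
    rw [hρα, hρ8]
    have hmain : (4 * Real.pi / ε)⁻¹ * (8 * Real.sqrt (δ^2 + α * w^2 / 8))
        ≤ Real.sqrt (D^2 + 8 * (α * w^2)) := by
      have hk : (4 * Real.pi / ε)⁻¹ * 8 = 2 * ε / Real.pi := by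
        field_simp; ring
      rw [← mul_assoc, hk]
      apply sqrt_mul_le_sqrt (by positivity)
      have hexp : (2 * ε / Real.pi)^2 * (δ^2 + α * w^2 / 8)
          = (4 * ε^2 * δ^2) / Real.pi^2 + (ε^2 / (2 * Real.pi^2)) * (α * w^2) := by
        field_simp; ring
      rw [hexp]
      have b1 : (4 * ε^2 * δ^2) / Real.pi^2 ≤ D^2 := by
        rw [div_le_iff₀ (by positivity : (0:ℝ) < Real.pi^2)]
        linarith [hDlb]
      have b2 : (ε^2 / (2 * Real.pi^2)) * (α * w^2) ≤ 8 * (α * w^2) := by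
        apply mul_le_mul_of_nonneg_right _ hwsq
        rw [div_le_iff₀ (by positivity : (0:ℝ) < 2 * Real.pi^2)]
        exact eps_sq_le_16pi ε hε' hε
      linarith
    calc (4 * Real.pi / ε)⁻¹ * ((1/α) * (8 * Real.sqrt (δ^2 + α * w^2 / 8)))
        = (1/α) * ((4 * Real.pi / ε)⁻¹ * (8 * Real.sqrt (δ^2 + α * w^2 / 8))) := by ring
      _ ≤ (1/α) * Real.sqrt (D^2 + 8 * (α * w^2)) :=
          mul_le_mul_of_nonneg_left hmain hα'.le
  · -- upper bound
    rw [hρα, hρ8]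
    have hmain : Real.sqrt (D^2 + 8 * (α * w^2))
        ≤ (4 * Real.pi / ε) * (8 * Real.sqrt (δ^2 + α * w^2 / 8)) := by
      rw [show (4 * Real.pi / ε) * (8 * Real.sqrt (δ^2 + α * w^2 / 8))
        = (32 * Real.pi / ε) * Real.sqrt (δ^2 + α * w^2 / 8) by ring]
      apply sqrt_le_mul_sqrt (by positivity)
      have hexp : (32 * Real.pi / ε)^2 * (δ^2 + α * w^2 / 8)
          = (1024 * Real.pi^2 / ε^2) * δ^2 + (128 * Real.pi^2 / ε^2) * (α * w^2) := by
        field_simp; ring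
      rw [hexp]
      have b1 : D^2 ≤ (1024 * Real.pi^2 / ε^2) * δ^2 := by
        calc D^2 ≤ 16 * Real.pi^2 * δ^2 := hDub
          _ ≤ (1024 * Real.pi^2 / ε^2) * δ^2 := by
              apply mul_le_mul_of_nonneg_right _ (sq_nonneg δ)
              rw [le_div_iff₀ (by positivity : (0:ℝ) < ε^2)]
              exact const_ub1 ε hε' hε
      have b2 : 8 * (α * w^2) ≤ (128 * Real.pi^2 / ε^2) * (α * w^2) := by
        apply mul_le_mul_of_nonneg_right _ hwsq
        rw [le_div_iff₀ (by positivity : (0:ℝ) < ε^2)]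
        exact const_ub2 ε hε' hε
      linarith
    calc (1/α) * Real.sqrt (D^2 + 8 * (α * w^2))
        ≤ (1/α) * ((4 * Real.pi / ε) * (8 * Real.sqrt (δ^2 + α * w^2 / 8))) :=
          mul_le_mul_of_nonneg_left hmain hα'.le
      _ = (4 * Real.pi / ε) * ((1/α) * (8 * Real.sqrt (δ^2 + α * w^2 / 8))) := by ring
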